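/- arXiv:2306.07134 — 2 statements merged into one kernel-verified Lean document; each statement's English description precedes it below -/
import Mathlib

section
/- If the profit function π(c) = α(c)·(Θ − θ·n·b(c) − E[r^s])·F is such that α is affine (α'' = 0), the yield rule is r̂(c) = Θ − θ·n·b(c), and b satisfies the equilibrium ODE b'(c) = ρ(c)·(1/(ξn) − b(c)) with ρ(c) = α'(c)/α(c) and ξ = θ/(Θ − E[r^s]), then the second derivative of π vanishes identically: π''(c) = 0 for all c. -/
/-- the second derivative of the profit function vanishes identically. -/
theorem stmt_11 (θ Θ Ers : ℝ) (hθ : 0 < θ) (hΘE : Ers < Θ)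
    (n : ℕ) (hn : 1 ≤ n) (F : ℝ) (hF : 0 < F)
    (ξ : ℝ) (hξ : ξ = θ / (Θ - Ers))
    (a bnd : ℝ) (α α' α'' b b' b'' : ℝ → ℝ)
    (hαpos : ∀ c ∈ Set.Ioo a bnd, 0 < α c)
    (hαd : ∀ c ∈ Set.Ioo a bnd, HasDerivAt α (α' c) c)
    (hα'd : ∀ c ∈ Set.Ioo a bnd, HasDerivAt α' (α'' c) c)
    (hα'' : ∀ c ∈ Set.Ioo a bnd, α'' c = 0)
    (hbd : ∀ c ∈ Set.Ioo a bnd, HasDerivAt b (b' c) c)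
    (hb'd : ∀ c ∈ Set.Ioo a bnd, HasDerivAt b' (b'' c) c)
    (hode : ∀ c ∈ Set.Ioo a bnd,
      b' c = (α' c / α c) * (1 / (ξ * n) - b c)) :
    ∃ π' : ℝ → ℝ,
      (∀ c ∈ Set.Ioo a bnd,
        HasDerivAt (fun c => α c * (Θ - θ * n * b c - Ers) * F) (π' c) c) ∧
      (∀ c ∈ Set.Ioo a bnd, HasDerivAt π' 0 c) := by
  refine ⟨fun _ => 0, ?_, fun c hc => hasDerivAt_const c 0⟩
  intro c hc
  have hα0 : α c ≠ 0 := (hαpos c hc).ne'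
  have hΘ0 : Θ - Ers ≠ 0 := sub_ne_zero.mpr hΘE.ne'
  have hξ0 : ξ ≠ 0 := by
    rw [hξ]; exact div_ne_zero hθ.ne' hΘ0
  have hn0 : (n : ℝ) ≠ 0 := by positivity
  have h1 : HasDerivAt (fun c => Θ - θ * n * b c - Ers) (-(θ * n * b' c)) c :=
    (((hbd c hc).const_mul (θ * n)).const_sub Θ).sub_const Ers
  have h2 := ((hαd c hc).mul h1).mul_const F
  refine h2.congr_deriv ?_
  show _ = (0:ℝ)
  rw [hode c hc, hξ]
  field_simp
  ring
end

section
/- Any differentiable function b satisfying the first-order condition ρ(c)·(Θ − nθ·b(c)) − nθ·b'(c) − ρ(c)·E[r^s] = 0, where ρ(c) = α'(c)/α(c), has the form b(c) = 1/(ξn) + Γ/α(c) for some constant Γ, where ξ = θ/(Θ − E[r^s]). -/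
/-- any solution of the first-order condition has the form
b(c) = 1/(ξn) + Γ/α(c). -/
theorem stmt_12 (θ Θ Ers : ℝ) (hθ : 0 < θ) (hΘE : Ers < Θ)
    (n : ℕ) (hn : 1 ≤ n) (ξ : ℝ) (hξ : ξ = θ / (Θ - Ers))
    (a bnd : ℝ) (α α' b b' : ℝ → ℝ)
    (hαpos : ∀ c ∈ Set.Ioo a bnd, 0 < α c)
    (hαd : ∀ c ∈ Set.Ioo a bnd, HasDerivAt α (α' c) c)
    (hbd : ∀ c ∈ Set.Ioo a bnd, HasDerivAt b (b' c) c)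
    (hfoc : ∀ c ∈ Set.Ioo a bnd,
      (α' c / α c) * (Θ - n * θ * b c) - n * θ * b' c - (α' c / α c) * Ers = 0) :
    ∃ Γ : ℝ, ∀ c ∈ Set.Ioo a bnd, b c = 1 / (ξ * n) + Γ / α c := by
  rcases Set.eq_empty_or_nonempty (Set.Ioo a bnd) with he | ⟨c₀, hc₀⟩
  · exact ⟨0, fun c hc => absurd hc (by simp [he])⟩
  have hnθ : (0:ℝ) < (n : ℝ) * θ := by
    have : (1:ℝ) ≤ (n:ℝ) := by exact_mod_cast hn
    nlinarith
  have hΘ : (0:ℝ) < Θ - Ers := by linarith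
  set k : ℝ := 1 / (ξ * n) with hk
  have hξv : ξ = θ / (Θ - Ers) := hξ
  have hkval : (n:ℝ) * θ * k = Θ - Ers := by
    rw [hk, hξv]
    field_simp
  set g : ℝ → ℝ := fun c => α c * (b c - k) with hg
  -- derivative of g vanishes on the interval
  have hgd : ∀ c ∈ Set.Ioo a bnd, HasDerivWithinAt g 0 (Set.Ioo a bnd) c := by
    intro c hc
    have hα := hαd c hc
    have hb := hbd c hc
    have hderiv : HasDerivAt g (α' c * (b c - k) + α c * b' c) c := by
      have := hα.mul ((hb.sub_const k))
      exact this
    have hαne : α c ≠ 0 := (hαpos c hc).ne'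
    have hf := hfoc c hc
    have key : α' c * (b c - k) + α c * b' c = 0 := by
      have h1 : α' c * (Θ - ↑n * θ * b c) - ↑n * θ * (α c * b' c) - α' c * Ers = 0 := by
        have := congrArg (fun x => x * α c) hf
        field_simp at this
        nlinarith [this]
      have h2 : α' c * ((n:ℝ) * θ * k - (n:ℝ) * θ * b c) = (n:ℝ) * θ * (α c * b' c) := by
        rw [hkval]; linarith
      have h3 : (n:ℝ) * θ * (α' c * (k - b c)) = (n:ℝ) * θ * (α c * b' c) := by
        nlinarith [h2]
      have h4 : α' c * (k - b c) = α c * b' c := by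
        exact mul_left_cancel₀ hnθ.ne' h3
      nlinarith [h4]
    have := hderiv.hasDerivWithinAt (s := Set.Ioo a bnd)
    rw [key] at this
    exact this
  -- g is constant
  refine ⟨g c₀, fun c hc => ?_⟩
  have hconst : g c = g c₀ := by
    have hconv : Convex ℝ (Set.Ioo a bnd) := convex_Ioo a bnd
    have := hconv.norm_image_sub_le_of_norm_hasDerivWithin_le
      (f := g) (f' := fun _ => (0:ℝ)) (C := 0)
      (fun x hx => hgd x hx) (fun x _ => by simp) hc₀ hc
    have : ‖g c - g c₀‖ ≤ 0 := by simpa using this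
    have := norm_le_zero_iff.mp this
    linarith [sub_eq_zero.mp this]
  have hαne : α c ≠ 0 := (hαpos c hc).ne'
  have : α c * (b c - k) = g c₀ := hconst
  field_simp
  nlinarith [this]
end
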